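/- arXiv:0803.3554 — 4 statements merged into one kernel-verified Lean document; each statement's English description precedes it below -/
import Mathlib

section
/- Let S(z) = Id + S_1 z^{-1} + ⋯ satisfy S*(-z)S(z) = Id, and define operators W_{k,l} (k,l ≥ 0) by the expansion ((S*)^{-1}(w) S^{-1}(z) - Id)/(z+w) = ∑_{k,l≥0} W_{k,l} z^{-k} w^{-l}. Then for all k, l ≥ 0: ∑_{m=0}^{k} W_{m,l} S_{k-m} = (-1)^{l+1} S_{k+l+1}. -/
/- STATEMENT 5: S(z) = Id + S_1 z^{-1} + ⋯ with S*(-z)S(z) = Id; T = S^{-1}, U = (S*)^{-1};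
W_{k,l} defined by ((S*)^{-1}(w) S^{-1}(z) - Id) / (z^{-1} + w^{-1}) = ∑ W_{k,l} z^{-k} w^{-l}
(coefficientwise: W_{k-1,l} + W_{k,l-1} = U_l T_k - δ_{k0}δ_{l0}·Id).
Then ∑_{m=0}^{k} W_{m,l} S_{k-m} = (-1)^{l+1} S_{k+l+1}. -/
theorem stmt_5 {H : Type*} [AddCommGroup H] [Module ℂ H] [FiniteDimensional ℂ H]
    (B : LinearMap.BilinForm ℂ H) (hB : B.Nondegenerate)
    (hBsymm : ∀ x y, B x y = B y x)
    (adj : (H →ₗ[ℂ] H) → (H →ₗ[ℂ] H))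
    (hadj : ∀ A x y, B (adj A x) y = B x (A y))
    (S T U : ℕ → (H →ₗ[ℂ] H)) (W : ℕ → ℕ → (H →ₗ[ℂ] H))
    (hS0 : S 0 = 1)
    -- the symplectic condition S*(-z)S(z) = Id :
    (hsymp : ∀ n : ℕ,
      (∑ i ∈ Finset.range (n + 1), ((-1 : ℂ) ^ i) • ((adj (S i)) ∘ₗ (S (n - i))))
        = if n = 0 then (1 : H →ₗ[ℂ] H) else 0)
    -- T is the inverse power series S^{-1}(z) :
    (hT : ∀ n : ℕ,
      (∑ i ∈ Finset.range (n + 1), (S i) ∘ₗ (T (n - i)))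
        = if n = 0 then (1 : H →ₗ[ℂ] H) else 0)
    -- U is the inverse power series (S*)^{-1}(w), where S*(w) = ∑ S_i* w^{-i} :
    (hU : ∀ n : ℕ,
      (∑ i ∈ Finset.range (n + 1), (adj (S i)) ∘ₗ (U (n - i)))
        = if n = 0 then (1 : H →ₗ[ℂ] H) else 0)
    -- defining relation of W : (z^{-1}+w^{-1})·∑ W_{k,l} z^{-k}w^{-l} = (S*)^{-1}(w)S^{-1}(z) - Id
    (hW : ∀ k l : ℕ,
      (if k = 0 then 0 else W (k - 1) l) + (if l = 0 then 0 else W k (l - 1))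
        = (U l) ∘ₗ (T k) - (if k = 0 ∧ l = 0 then (1 : H →ₗ[ℂ] H) else 0)) :
    ∀ k l : ℕ,
      (∑ m ∈ Finset.range (k + 1), (W m l) ∘ₗ (S (k - m)))
        = ((-1 : ℂ) ^ (l + 1)) • S (k + l + 1) := by
  -- Step 1: T is also a left inverse of S.
  have hTS : ∀ n : ℕ, (∑ i ∈ Finset.range (n + 1), (T i) ∘ₗ (S (n - i)))
      = if n = 0 then (1 : H →ₗ[ℂ] H) else 0 := by
    have hmul : (PowerSeries.mk S) * (PowerSeries.mk T) = 1 := by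
      ext n : 1
      rw [PowerSeries.coeff_mul, Finset.Nat.sum_antidiagonal_eq_sum_range_succ_mk]
      simp only [PowerSeries.coeff_mk, PowerSeries.coeff_one]
      simpa [Module.End.mul_eq_comp] using hT n
    have hunit : IsUnit (PowerSeries.mk S) := by
      rw [PowerSeries.isUnit_iff_constantCoeff]
      simp [hS0]
    obtain ⟨u, hu⟩ := hunit
    have hTinv : (PowerSeries.mk T) = ↑u⁻¹ := by
      have h2 := congrArg (fun x => (↑u⁻¹ : PowerSeries (H →ₗ[ℂ] H)) * x) hmul
      simp only [← hu, ← mul_assoc, Units.inv_mul, one_mul, mul_one] at h2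
      exact h2
    have hmul2 : (PowerSeries.mk T) * (PowerSeries.mk S) = 1 := by
      rw [hTinv, ← hu]
      exact_mod_cast u.inv_mul
    intro n
    have := congrArg (PowerSeries.coeff n) hmul2
    rw [PowerSeries.coeff_mul, Finset.Nat.sum_antidiagonal_eq_sum_range_succ_mk] at this
    simpa [Module.End.mul_eq_comp, PowerSeries.coeff_one] using this
  -- Step 2: the key recursion.
  have key : ∀ k l : ℕ,
      (∑ m ∈ Finset.range (k + 1), (W m l) ∘ₗ (S (k - m)))
        + (if l = 0 then 0 else ∑ m ∈ Finset.range (k + 2), (W m (l - 1)) ∘ₗ (S (k + 1 - m)))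
      = -(if l = 0 then S (k + 1) else 0) := by
    intro k l
    have h1 : ∑ m ∈ Finset.range (k + 2),
        ((if m = 0 then 0 else W (m - 1) l) + (if l = 0 then 0 else W m (l - 1))) ∘ₗ S (k + 1 - m)
        = ∑ m ∈ Finset.range (k + 2),
        ((U l) ∘ₗ (T m) - (if m = 0 ∧ l = 0 then (1 : H →ₗ[ℂ] H) else 0)) ∘ₗ S (k + 1 - m) :=
      Finset.sum_congr rfl fun m _ => by rw [hW]
    simp only [← Module.End.mul_eq_comp] at h1 ⊢
    rw [Finset.sum_congr rfl (fun m _ => add_mul _ _ _), Finset.sum_add_distrib] at h1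
    rw [Finset.sum_congr rfl (fun m _ => sub_mul _ _ _), Finset.sum_sub_distrib] at h1
    -- first piece of LHS
    have e1 : ∑ m ∈ Finset.range (k + 2), (if m = 0 then 0 else W (m - 1) l) * S (k + 1 - m)
        = ∑ m ∈ Finset.range (k + 1), W m l * S (k - m) := by
      rw [Finset.sum_range_succ']
      simp [Nat.succ_sub_succ]
    -- second piece of LHS
    have e2 : ∑ m ∈ Finset.range (k + 2), (if l = 0 then 0 else W m (l - 1)) * S (k + 1 - m)
        = if l = 0 then 0 else ∑ m ∈ Finset.range (k + 2), W m (l - 1) * S (k + 1 - m) := by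
      split_ifs with hl <;> simp
    -- first piece of RHS
    have e3 : ∑ m ∈ Finset.range (k + 2), (U l * T m) * S (k + 1 - m) = 0 := by
      have : ∑ m ∈ Finset.range (k + 2), (U l * T m) * S (k + 1 - m)
          = U l * ∑ m ∈ Finset.range (k + 2), T m * S (k + 1 - m) := by
        rw [Finset.mul_sum]
        exact Finset.sum_congr rfl fun m _ => by rw [mul_assoc]
      rw [this]
      have := hTS (k + 1)
      simp only [← Module.End.mul_eq_comp] at this
      rw [this]
      simp
    -- second piece of RHS
    have e4 : ∑ m ∈ Finset.range (k + 2), (if m = 0 ∧ l = 0 then (1 : H →ₗ[ℂ] H) else 0) * S (k + 1 - m)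
        = if l = 0 then S (k + 1) else 0 := by
      split_ifs with hl
      · subst hl
        rw [Finset.sum_range_succ']
        simp
      · simp [hl]
    rw [e1, e2, e3, e4] at h1
    rw [h1]
    abel
  intro k l
  induction l generalizing k with
  | zero =>
    have h := key k 0
    simp only [if_pos rfl, add_zero] at h
    simpa using h
  | succ l ih =>
    have hk := key k (l + 1)
    simp only [Nat.succ_ne_zero, if_false, Nat.add_sub_cancel, neg_zero, add_zero] at hk
    have hk2 : (k + 2 : ℕ) = (k + 1) + 1 := rfl
    rw [hk2, ih (k + 1)] at hk
    have hA := eq_neg_of_add_eq_zero_left hk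
    rw [hA, show k + 1 + l + 1 = k + (l + 1) + 1 by omega, ← neg_smul]
    congr 1
    rw [pow_succ]
    ring
end

section
/- Let F be a smooth function (or formal power series) in variables q_k^α (k ≥ 0, 1 ≤ α ≤ N) satisfying the topological recursion relations ∂_{α,k+1}∂_{β,l}∂_{γ,m} F = ∑_{μ,ν} (∂_{α,k}∂_{μ,0} F) g^{μν} (∂_{ν,0}∂_{β,l}∂_{γ,m} F) for all k,l,m ≥ 0 and all indices. Then the function Φ(q) = F(q, 0, 0, …) of q = (q_0^1,…,q_0^N) satisfies the WDVV equations: ∑_{e,f} (∂_a∂_b∂_e Φ) g^{ef} (∂_f∂_c∂_d Φ) = ∑_{e,f} (∂_c∂_b∂_e Φ) g^{ef} (∂_f∂_a∂_d Φ) for all a,b,c,d. -/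
open MvPolynomial

lemma pderiv_comm' {σ : Type*} {R : Type*} [CommSemiring R] (i j : σ) (p : MvPolynomial σ R) :
    pderiv i (pderiv j p) = pderiv j (pderiv i p) := by
  classical
  induction p using MvPolynomial.induction_on with
  | C c => simp
  | add p q hp hq => simp [hp, hq]
  | mul_X p s hp =>
    simp only [pderiv_mul, map_add, hp, pderiv_X]
    have h1 : ∀ t : σ, pderiv t ((Pi.single (M := fun _ => MvPolynomial σ R) i 1 : σ → MvPolynomial σ R) s) = 0 := by
      intro t; rcases eq_or_ne i s with h | h <;> simp [h, Pi.single_apply]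
    have h2 : pderiv i ((Pi.single (M := fun _ => MvPolynomial σ R) j 1 : σ → MvPolynomial σ R) s) = 0 := by
      rcases eq_or_ne j s with h | h <;> simp [h, Pi.single_apply]
    rw [h2, h1 j]; ring

lemma pderiv_subst {n : ℕ} (a : Fin n) (F : MvPolynomial (ℕ × Fin n) ℂ) :
    pderiv a (aeval
      (fun p : ℕ × Fin n => if p.1 = 0 then (X p.2 : MvPolynomial (Fin n) ℂ) else 0) F)
    = aeval (fun p : ℕ × Fin n => if p.1 = 0 then (X p.2 : MvPolynomial (Fin n) ℂ) else 0)
        (pderiv (0, a) F) := by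
  set σ := fun p : ℕ × Fin n => if p.1 = 0 then (X p.2 : MvPolynomial (Fin n) ℂ) else 0 with hσ
  induction F using MvPolynomial.induction_on with
  | C c => rw [aeval_C, pderiv_C, map_zero]; simp
  | add p q hp hq => rw [map_add, map_add, hp, hq, ← map_add, ← map_add]
  | mul_X p s hp =>
    have hs : pderiv a (σ s) = aeval σ (pderiv (0, a) (X s : MvPolynomial (ℕ × Fin n) ℂ)) := by
      rcases s with ⟨k, b⟩
      rcases eq_or_ne k 0 with hk | hk
      · subst hk
        rcases eq_or_ne b a with hb | hb
        · subst hb; simp [hσ]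
        · have h2 : ((0 : ℕ), b) ≠ ((0 : ℕ), a) := by simp [hb]
          simp [hσ, pderiv_X_of_ne h2, pderiv_X_of_ne hb]
      · have h2 : ((k : ℕ), b) ≠ ((0 : ℕ), a) := by simp [hk]
        simp [hσ, hk, pderiv_X_of_ne h2]
    rw [map_mul, aeval_X, pderiv_mul, hp, pderiv_mul, map_add, map_mul, map_mul, aeval_X, hs]

/- STATEMENT 7: If F (a formal function of the variables q_k^α, modelled as a polynomial)
satisfies the topological recursion relations, then Φ(q) = F(q,0,0,…) satisfies WDVV. -/
theorem stmt_7 {n : ℕ} (g : Matrix (Fin n) (Fin n) ℂ)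
    (hgdet : IsUnit g.det) (hgsymm : g.IsSymm)
    (F : MvPolynomial (ℕ × Fin n) ℂ)
    -- topological recursion relations :
    (hTRR : ∀ (k l m : ℕ) (α β γ : Fin n),
      pderiv (k + 1, α) (pderiv (l, β) (pderiv (m, γ) F)) =
        ∑ μ : Fin n, ∑ ν : Fin n,
          g⁻¹ μ ν • (pderiv (k, α) (pderiv (0, μ) F) *
            pderiv (0, ν) (pderiv (l, β) (pderiv (m, γ) F))))
    -- Φ is obtained from F by setting all q_k^α with k ≥ 1 to zero :
    (Φ : MvPolynomial (Fin n) ℂ)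
    (hΦ : Φ = MvPolynomial.aeval
      (fun p : ℕ × Fin n => if p.1 = 0 then (X p.2 : MvPolynomial (Fin n) ℂ) else 0) F) :
    -- WDVV equations :
    ∀ a b c d : Fin n,
      (∑ e : Fin n, ∑ f : Fin n,
        g⁻¹ e f • (pderiv a (pderiv b (pderiv e Φ)) * pderiv f (pderiv c (pderiv d Φ))))
      = ∑ e : Fin n, ∑ f : Fin n,
        g⁻¹ e f • (pderiv c (pderiv b (pderiv e Φ)) * pderiv f (pderiv a (pderiv d Φ))) := by
  intro a b c d
  -- differentiate the TRR (k = l = m = 0) with respect to q_0^δ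
  have hD : ∀ α β γ δ : Fin n,
      pderiv ((0 : ℕ), δ) (pderiv (1, α) (pderiv (0, β) (pderiv (0, γ) F))) =
        (∑ μ : Fin n, ∑ ν : Fin n, g⁻¹ μ ν •
          (pderiv ((0 : ℕ), δ) (pderiv (0, α) (pderiv (0, μ) F)) *
            pderiv (0, ν) (pderiv (0, β) (pderiv (0, γ) F))))
        + (∑ μ : Fin n, ∑ ν : Fin n, g⁻¹ μ ν •
          (pderiv ((0 : ℕ), α) (pderiv (0, μ) F) *
            pderiv (0, δ) (pderiv (0, ν) (pderiv (0, β) (pderiv (0, γ) F))))) := by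
    intro α β γ δ
    rw [hTRR 0 0 0 α β γ, map_sum, ← Finset.sum_add_distrib]
    refine Finset.sum_congr rfl fun μ _ => ?_
    rw [map_sum, ← Finset.sum_add_distrib]
    refine Finset.sum_congr rfl fun ν _ => ?_
    rw [Derivation.map_smul, pderiv_mul, smul_add]
  -- the mixed fourth derivatives of F are symmetric, so the second sums agree
  have hT : ∀ β γ δ : Fin n, ∀ ν : Fin n,
      pderiv ((0 : ℕ), δ) (pderiv (0, ν) (pderiv (0, β) (pderiv (0, γ) F))) =
      pderiv ((0 : ℕ), β) (pderiv (0, ν) (pderiv (0, δ) (pderiv (0, γ) F))) := by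
    intro β γ δ ν
    rw [pderiv_comm' ((0 : ℕ), δ) (0, ν), pderiv_comm' ((0 : ℕ), δ) (0, β),
      ← pderiv_comm' ((0 : ℕ), β) (0, ν)]
  -- the left-hand sides with β and δ exchanged agree
  have hL : ∀ α β γ δ : Fin n,
      pderiv ((0 : ℕ), δ) (pderiv (1, α) (pderiv (0, β) (pderiv (0, γ) F))) =
      pderiv ((0 : ℕ), β) (pderiv (1, α) (pderiv (0, δ) (pderiv (0, γ) F))) := by
    intro α β γ δ
    rw [pderiv_comm' ((0 : ℕ), δ) ((1 : ℕ), α), pderiv_comm' ((0 : ℕ), δ) ((0 : ℕ), β),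
      ← pderiv_comm' ((0 : ℕ), β) ((1 : ℕ), α)]
  -- key identity for F
  have keyF : ∀ α β γ δ : Fin n,
      (∑ μ : Fin n, ∑ ν : Fin n, g⁻¹ μ ν •
        (pderiv ((0 : ℕ), δ) (pderiv (0, α) (pderiv (0, μ) F)) *
          pderiv (0, ν) (pderiv (0, β) (pderiv (0, γ) F))))
      = ∑ μ : Fin n, ∑ ν : Fin n, g⁻¹ μ ν •
        (pderiv ((0 : ℕ), β) (pderiv (0, α) (pderiv (0, μ) F)) *
          pderiv (0, ν) (pderiv (0, δ) (pderiv (0, γ) F))) := by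
    intro α β γ δ
    have h1 := hD α β γ δ
    have h2 := hD α δ γ β
    rw [hL α β γ δ] at h1
    rw [h2] at h1
    have hsame : (∑ μ : Fin n, ∑ ν : Fin n, g⁻¹ μ ν •
          (pderiv ((0 : ℕ), α) (pderiv (0, μ) F) *
            pderiv (0, β) (pderiv (0, ν) (pderiv (0, δ) (pderiv (0, γ) F)))))
        = ∑ μ : Fin n, ∑ ν : Fin n, g⁻¹ μ ν •
          (pderiv ((0 : ℕ), α) (pderiv (0, μ) F) *
            pderiv (0, δ) (pderiv (0, ν) (pderiv (0, β) (pderiv (0, γ) F)))) := by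
      refine Finset.sum_congr rfl fun μ _ => Finset.sum_congr rfl fun ν _ => ?_
      rw [hT β γ δ ν]
    rw [hsame] at h1
    exact add_right_cancel h1.symm
  -- push the identity through the substitution q_k = 0 (k ≥ 1)
  simp only [hΦ, pderiv_subst, ← map_mul, ← map_smul, ← map_sum]
  exact congrArg _ (keyF b c d a)
end

section
/- In the rank-one case, suppose F = ∑_{n≥0} q_1^{2-n} c_n (c_n of degree n in q_0, q_2, q_3, …) satisfies ∂_0 c_1 = 0, ∂_0² c_2 = 0, ∂_0³ c_3 = -1, and the TRR coefficient equation -6 c_3 = 2 (∂_0² c_3)(∂_0 c_3). Then c_3 = -(1/6) L³ where L = -∂_0² c_3 is a degree-1 form in q_0, q_2, q_3, … with coefficient of q_0 equal to 1. -/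
open MvPolynomial


lemma coeff_pderiv_aux (i : ℕ) (m : ℕ →₀ ℕ) (f : MvPolynomial ℕ ℂ) :
    coeff m (pderiv i f) = ((m i : ℂ) + 1) * coeff (m + Finsupp.single i 1) f := by
  induction f using MvPolynomial.induction_on' with
  | add p q hp hq => simp only [map_add, coeff_add, hp, hq]; ring
  | monomial s a =>
    rw [pderiv_monomial, coeff_monomial, coeff_monomial]
    by_cases hs : s = m + Finsupp.single i 1
    · subst hs
      rw [if_pos rfl, if_pos (by ext j; simp [Finsupp.single_apply, Finsupp.tsub_apply])]
      simp [Finsupp.single_apply]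
      ring
    · rw [if_neg hs, mul_zero]
      by_cases h : s - Finsupp.single i 1 = m
      · have hsi : s i = 0 := by
          by_contra hne
          apply hs
          ext j
          have := DFunLike.congr_fun h j
          rcases eq_or_ne j i with rfl | hj
          · simp [Finsupp.tsub_apply] at this ⊢
            omega
          · simp [Finsupp.tsub_apply, Finsupp.single_apply, Ne.symm hj] at this ⊢
            omega
        rw [if_pos h, hsi]
        simp
      · rw [if_neg h]

lemma pderiv_isHomogeneous {f : MvPolynomial ℕ ℂ} {n : ℕ} (i : ℕ)
    (hf : f.IsHomogeneous (n + 1)) : (pderiv i f).IsHomogeneous n := by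
  intro d hd
  rw [coeff_pderiv_aux] at hd
  have h2 : coeff (d + Finsupp.single i 1) f ≠ 0 := by
    intro h; simp [h] at hd
  have h3 := hf h2
  rw [map_add] at h3
  have hs : (Finsupp.weight 1) (Finsupp.single i 1) = 1 := by
    simp [Finsupp.weight_apply, Finsupp.sum_single_index]
  omega

/- STATEMENT 15: rank-one case. If ∂_0 c_1 = 0, ∂_0² c_2 = 0, ∂_0³ c_3 = -1 and
-6 c_3 = 2 (∂_0² c_3)(∂_0 c_3), then c_3 = -(1/6) L³ where L = -∂_0² c_3 is a
homogeneous degree-1 form in q_0, q_2, q_3, … with coefficient of q_0 equal to 1. -/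
theorem stmt_15 (c : ℕ → MvPolynomial ℕ ℂ)
    (hdeg : ∀ n : ℕ, (c n).IsHomogeneous n)
    (hc1var : ∀ n : ℕ, pderiv 1 (c n) = 0)
    (h1 : pderiv 0 (c 1) = 0)
    (h2 : pderiv 0 (pderiv 0 (c 2)) = 0)
    (h3 : pderiv 0 (pderiv 0 (pderiv 0 (c 3))) = -1)
    (hTRR : (-6 : ℂ) • c 3 = (2 : ℂ) • (pderiv 0 (pderiv 0 (c 3)) * pderiv 0 (c 3))) :
    ∃ L : MvPolynomial ℕ ℂ,
      L = -(pderiv 0 (pderiv 0 (c 3))) ∧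
      L.IsHomogeneous 1 ∧
      MvPolynomial.coeff (Finsupp.single 0 1) L = 1 ∧
      c 3 = C (-(1 / 6 : ℂ)) * L ^ 3 := by
  set A := pderiv 0 (c 3) with hA
  set B := pderiv 0 A with hB
  refine ⟨-B, rfl, ?_, ?_, ?_⟩
  · exact (pderiv_isHomogeneous 0 (pderiv_isHomogeneous 0 (hdeg 3))).neg
  · have hpd : pderiv 0 (-B) = 1 := by rw [map_neg, h3]; ring
    have := coeff_pderiv_aux 0 0 (-B)
    rw [hpd] at this
    simpa using this.symm
  · -- convert smul to numeral multiplication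
    have hC6 : (MvPolynomial.C (-6 : ℂ) : MvPolynomial ℕ ℂ) = -6 := by
      rw [map_neg, map_ofNat]
    have hC2 : (MvPolynomial.C (2 : ℂ) : MvPolynomial ℕ ℂ) = 2 := map_ofNat _ _
    have hT : (-6 : MvPolynomial ℕ ℂ) * c 3 = 2 * (B * A) := by
      rw [← hC6, ← hC2, ← smul_eq_C_mul, ← smul_eq_C_mul]; exact hTRR
    have hd' : (-6 : MvPolynomial ℕ ℂ) * A = 2 * (-A + B * B) := by
      have hder := congrArg (⇑(pderiv 0)) hTRR
      rw [Derivation.map_smul, Derivation.map_smul, pderiv_mul, ← hB, h3] at hder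
      rw [← hC6, ← hC2, ← smul_eq_C_mul, ← smul_eq_C_mul]
      rw [hder]; congr 1; ring
    have h2c : (2 : MvPolynomial ℕ ℂ) * (6 * c 3 - B ^ 3) = 0 := by
      linear_combination (-2 : MvPolynomial ℕ ℂ) * hT + B * hd'
    have h2ne : (2 : MvPolynomial ℕ ℂ) ≠ 0 := by
      intro h
      have := congrArg (MvPolynomial.eval (fun _ => 0)) h
      rw [map_ofNat, map_zero] at this
      norm_num at this
    have hcube : (6 : MvPolynomial ℕ ℂ) * c 3 = B ^ 3 := by
      rcases mul_eq_zero.mp h2c with h | h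
      · exact absurd h h2ne
      · linear_combination h
    have hsix : (MvPolynomial.C (1 / 6 : ℂ) : MvPolynomial ℕ ℂ) * 6 = 1 := by
      rw [← map_ofNat (MvPolynomial.C : ℂ →+* MvPolynomial ℕ ℂ) 6, ← map_mul]
      norm_num
    rw [show MvPolynomial.C (-(1 / 6 : ℂ)) = -MvPolynomial.C (1 / 6 : ℂ) from map_neg _ _]
    linear_combination (MvPolynomial.C (1 / 6 : ℂ)) * hcube - (c 3) * hsix
end

section
/- For the genus-0 Gromov-Witten potential of a point, the psi-class intersection numbers on the moduli space of genus-0 stable curves satisfy: ∫_{M̄_{0,n}} ψ_1^{i_1} ⋯ ψ_n^{i_n} = (n-3)!/(i_1! ⋯ i_n!) whenever i_1 + ⋯ + i_n = n - 3 (and the integral is 0 otherwise). Equivalently, the formal series F(t_0,t_1,…) = ∑_{n≥3} (1/n!) ∑_{i_1+⋯+i_n=n-3} (n-3)!/(i_1!⋯i_n!) t_{i_1}⋯t_{i_n} satisfies the string equation ∂_0 F = (1/2)t_0² + ∑_{i≥0} t_{i+1} ∂_i F. -/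
/-- Number of marked points of a monomial exponent d : the monomial
t_{i_1}⋯t_{i_n} corresponds to d with d(i) = #{j : i_j = i}, so n = ∑_i d(i). -/
def nPts (d : ℕ →₀ ℕ) : ℕ := d.sum fun _ m => m

/-- Total ψ-degree ∑_i i · d(i). -/
def wt (d : ℕ →₀ ℕ) : ℕ := d.sum fun i m => i * m

/-- Coefficient of the monomial ∏ t_i^{d(i)} in the genus-0 point potential
F = ∑_{n≥3} (1/n!) ∑_{i_1+⋯+i_n=n-3} (n-3)!/(i_1!⋯i_n!) t_{i_1}⋯t_{i_n}, namely
(n-3)! / (∏_i (i!)^{d(i)} · d(i)!) when n = nPts d ≥ 3 and wt d = n - 3, else 0.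
(This encodes ∫_{M̄_{0,n}} ψ^{i_1}⋯ψ^{i_n} = (n-3)!/(i_1!⋯i_n!).) -/
noncomputable def cF (d : ℕ →₀ ℕ) : ℂ :=
  if 3 ≤ nPts d ∧ wt d + 3 = nPts d then
    (Nat.factorial (nPts d - 3) : ℂ) /
      ((d.prod fun i m => (Nat.factorial i) ^ m * Nat.factorial m : ℕ) : ℂ)
  else 0

/-- Auxiliary: the denominator product. -/
def Pd (d : ℕ →₀ ℕ) : ℕ := d.prod fun i m => (Nat.factorial i) ^ m * Nat.factorial m

lemma cF_eq (d : ℕ →₀ ℕ) :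
    cF d = if 3 ≤ nPts d ∧ wt d + 3 = nPts d then
      ((nPts d - 3).factorial : ℂ) / ((Pd d : ℕ) : ℂ) else 0 := rfl

lemma nPts_add_single (d : ℕ →₀ ℕ) (a : ℕ) : nPts (d + Finsupp.single a 1) = nPts d + 1 := by
  unfold nPts
  rw [Finsupp.sum_add_index' (fun _ => rfl) (fun _ _ _ => rfl)]
  simp [Finsupp.sum_single_index]

lemma wt_add_single (d : ℕ →₀ ℕ) (a : ℕ) : wt (d + Finsupp.single a 1) = wt d + a := by
  unfold wt
  rw [Finsupp.sum_add_index' (fun i => by simp) (fun i b c => by ring)]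
  simp [Finsupp.sum_single_index]

lemma Pd_add_single (d : ℕ →₀ ℕ) (a : ℕ) :
    Pd (d + Finsupp.single a 1) = a.factorial * (d a + 1) * Pd d := by
  classical
  unfold Pd
  rw [← Finsupp.mul_prod_erase' (d + Finsupp.single a 1) a _ (fun i => by simp),
      ← Finsupp.mul_prod_erase' d a _ (fun i => by simp)]
  have h1 : (d + Finsupp.single a 1).erase a = d.erase a := by
    ext i; by_cases h : i = a <;> simp [Finsupp.erase_apply, h]
  have h2 : (d + Finsupp.single a 1 : ℕ →₀ ℕ) a = d a + 1 := by simp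
  rw [h1, h2, pow_succ, Nat.factorial_succ]
  ring

lemma Pd_pos (d : ℕ →₀ ℕ) : 0 < Pd d := by
  unfold Pd Finsupp.prod
  exact Finset.prod_pos fun i _ =>
    Nat.mul_pos (Nat.pow_pos i.factorial_pos) (Nat.factorial_pos _)

lemma sub_add_single (d : ℕ →₀ ℕ) (j : ℕ) (hj : j ∈ d.support) :
    (d - Finsupp.single j 1) + Finsupp.single j 1 = d := by
  have h1 : 1 ≤ d j := Nat.one_le_iff_ne_zero.mpr (Finsupp.mem_support_iff.mp hj)
  ext i
  rcases eq_or_ne i j with rfl | h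
  · simp only [Finsupp.add_apply, Finsupp.tsub_apply, Finsupp.single_eq_same]
    omega
  · simp [Finsupp.add_apply, Finsupp.tsub_apply, Finsupp.single_apply, h.symm,
      Ne.symm h]

/- STATEMENT 16: the series F with these coefficients satisfies the string equation
∂_0 F = (1/2) t_0² + ∑_{i≥0} t_{i+1} ∂_i F, stated coefficientwise: for every
monomial d, the coefficient of d in ∂_0 F equals the coefficient of d in the RHS. -/
theorem stmt_16 :
    ∀ d : ℕ →₀ ℕ,
      ((d 0 : ℂ) + 1) * cF (d + Finsupp.single 0 1)
        = (if d = Finsupp.single 0 2 then (1 / 2 : ℂ) else 0)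
          + ∑ j ∈ d.support,
              if j = 0 then 0
              else ((((d - Finsupp.single j 1 : ℕ →₀ ℕ) (j - 1) : ℕ) : ℂ) + 1) *
                cF ((d - Finsupp.single j 1 : ℕ →₀ ℕ) + Finsupp.single (j - 1) 1) := by
  intro d
  by_cases hw : wt d + 2 = nPts d
  · by_cases hn : 3 ≤ nPts d
    · -- main case
      have hd2 : d ≠ Finsupp.single 0 2 := by
        rintro rfl
        have : nPts (Finsupp.single 0 2) = 2 := by
          simp [nPts, Finsupp.sum_single_index]
        omega
      have hP : ((Pd d : ℕ) : ℂ) ≠ 0 := Nat.cast_ne_zero.mpr (Pd_pos d).ne'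
      have key : ∀ j ∈ d.support,
          (if j = 0 then (0:ℂ)
           else ((((d - Finsupp.single j 1 : ℕ →₀ ℕ) (j - 1) : ℕ) : ℂ) + 1) *
              cF ((d - Finsupp.single j 1 : ℕ →₀ ℕ) + Finsupp.single (j - 1) 1))
          = ((j * d j : ℕ) : ℂ) * (((nPts d - 3).factorial : ℂ) / ((Pd d : ℕ) : ℂ)) := by
        intro j hj
        by_cases hj0 : j = 0
        · subst hj0; simp
        · rw [if_neg hj0]
          obtain ⟨k, rfl⟩ := Nat.exists_eq_succ_of_ne_zero hj0
          have hdj : d (k+1) ≠ 0 := Finsupp.mem_support_iff.mp hj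
          set e := d - Finsupp.single (k+1) 1 with he_def
          have he : e + Finsupp.single (k+1) 1 = d := sub_add_single d (k+1) hj
          have hdk : e (k+1) + 1 = d (k+1) := by
            have := congrArg (fun f : ℕ →₀ ℕ => f (k+1)) he
            simpa using this
          have hn1 : nPts d = nPts e + 1 := by rw [← he, nPts_add_single]
          have hw1 : wt d = wt e + (k+1) := by rw [← he, wt_add_single]
          have hsub : k + 1 - 1 = k := rfl
          rw [hsub]
          have hcond : 3 ≤ nPts (e + Finsupp.single k 1) ∧
              wt (e + Finsupp.single k 1) + 3 = nPts (e + Finsupp.single k 1) := by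
            rw [nPts_add_single, wt_add_single]; omega
          rw [cF_eq, if_pos hcond, nPts_add_single, Pd_add_single]
          have hPd : Pd d = (k+1).factorial * d (k+1) * Pd e := by
            conv_lhs => rw [← he]
            rw [Pd_add_single, hdk]
          rw [hPd]
          have hfac : nPts e + 1 - 3 = nPts d - 3 := by omega
          rw [hfac, Nat.factorial_succ]
          have h1 : ((k.factorial : ℕ) : ℂ) ≠ 0 :=
            Nat.cast_ne_zero.mpr k.factorial_pos.ne'
          have h2 : ((Pd e : ℕ) : ℂ) ≠ 0 := Nat.cast_ne_zero.mpr (Pd_pos e).ne'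
          have h3 : ((e k : ℂ) + 1) ≠ 0 := Nat.cast_add_one_ne_zero (e k)
          have h4 : ((d (k+1) : ℕ) : ℂ) ≠ 0 := Nat.cast_ne_zero.mpr hdj
          have h5 : ((k : ℂ) + 1) ≠ 0 := Nat.cast_add_one_ne_zero k
          push_cast
          field_simp
      rw [if_neg hd2, zero_add, Finset.sum_congr rfl key, ← Finset.sum_mul]
      have hsum : (∑ j ∈ d.support, ((j * d j : ℕ) : ℂ)) = ((wt d : ℕ) : ℂ) := by
        rw [← Nat.cast_sum]
        congr 1
      rw [hsum]
      have hcondL : 3 ≤ nPts (d + Finsupp.single 0 1) ∧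
          wt (d + Finsupp.single 0 1) + 3 = nPts (d + Finsupp.single 0 1) := by
        rw [nPts_add_single, wt_add_single]; omega
      rw [cF_eq, if_pos hcondL, nPts_add_single, Pd_add_single]
      have hfacL : nPts d + 1 - 3 = (nPts d - 3) + 1 := by omega
      have hwL : wt d = (nPts d - 3) + 1 := by omega
      rw [hfacL, hwL, Nat.factorial_succ, Nat.factorial_zero]
      have h5 : ((d 0 : ℕ) : ℂ) + 1 ≠ 0 := Nat.cast_add_one_ne_zero (d 0)
      push_cast
      field_simp
    · -- degenerate case: nPts d = 2, wt d = 0, so d = single 0 2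
      have hw0 : wt d = 0 := by omega
      have hn2 : nPts d = 2 := by omega
      have hsupp : ∀ i ∈ d.support, i = 0 := by
        intro i hi
        by_contra h
        have h1 : 1 ≤ i * d i :=
          Nat.one_le_iff_ne_zero.mpr
            (mul_ne_zero h (Finsupp.mem_support_iff.mp hi))
        have h2 : i * d i ≤ wt d :=
          Finset.single_le_sum (f := fun i => i * d i) (fun _ _ => Nat.zero_le _) hi
        omega
      have hd : d = Finsupp.single 0 (d 0) := by
        ext i
        rcases eq_or_ne i 0 with rfl | h
        · simp
        · have : i ∉ d.support := fun hi => h (hsupp i hi)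
          rw [Finsupp.notMem_support_iff.mp this]
          simp [Finsupp.single_apply, Ne.symm h]
      have hd0 : d 0 = 2 := by
        have : nPts (Finsupp.single 0 (d 0)) = d 0 := by
          simp [nPts, Finsupp.sum_single_index]
        rw [← hd] at this
        omega
      rw [hd0] at hd
      subst hd
      have h13 : (Finsupp.single 0 2 + Finsupp.single 0 1 : ℕ →₀ ℕ)
          = Finsupp.single 0 3 := by
        rw [← Finsupp.single_add]
      rw [h13]
      have hnp : nPts (Finsupp.single 0 3) = 3 := by
        simp [nPts, Finsupp.sum_single_index]
      have hwp : wt (Finsupp.single 0 3) = 0 := by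
        simp [wt, Finsupp.sum_single_index]
      have hPd3 : Pd (Finsupp.single 0 3) = 6 := by
        unfold Pd
        rw [Finsupp.prod_single_index (by simp)]
        simp [Nat.factorial]
      rw [cF_eq, if_pos (by rw [hnp, hwp]; omega), hnp, hPd3]
      rw [if_pos rfl]
      have hsupp2 : (Finsupp.single 0 2 : ℕ →₀ ℕ).support = {0} :=
        Finsupp.support_single_ne_zero 0 (by norm_num)
      rw [hsupp2]
      simp [Nat.factorial]
      norm_num
  · -- off-diagonal case: everything is zero
    have hd2 : d ≠ Finsupp.single 0 2 := by
      rintro rfl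
      apply hw
      simp [wt, nPts, Finsupp.sum_single_index]
    have hL : cF (d + Finsupp.single 0 1) = 0 := by
      rw [cF_eq, if_neg]
      rintro ⟨h1, h2⟩
      rw [nPts_add_single, wt_add_single] at h2
      omega
    rw [hL, if_neg hd2, mul_zero, zero_add]
    rw [Finset.sum_eq_zero]
    intro j hj
    by_cases hj0 : j = 0
    · simp [hj0]
    · rw [if_neg hj0]
      obtain ⟨k, rfl⟩ := Nat.exists_eq_succ_of_ne_zero hj0
      set e := d - Finsupp.single (k+1) 1 with he_def
      have he : e + Finsupp.single (k+1) 1 = d := sub_add_single d (k+1) hj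
      have hn1 : nPts d = nPts e + 1 := by rw [← he, nPts_add_single]
      have hw1 : wt d = wt e + (k+1) := by rw [← he, wt_add_single]
      have hz : cF (e + Finsupp.single (k+1-1) 1) = 0 := by
        rw [show k+1-1 = k from rfl, cF_eq, if_neg]
        rintro ⟨h1, h2⟩
        rw [nPts_add_single] at h1 h2
        rw [wt_add_single] at h2
        omega
      rw [hz, mul_zero]
end
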